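/- Let $g:\mathbb{S}^{m-1}\to\mathbb{R}$ be an integrable function on the unit sphere in $\mathbb{R}^m$ ($m\ge 2$) such that the matrix $M=\big(\int_{\mathbb{S}^{m-1}} x_i x_j\, g(x)\, d{\cal H}^{m-1}(x)\big)_{i,j=1}^m$ equals $c\, I_m$ for some $c\in\mathbb{R}$. Then $\int_{\mathbb{S}^{m-1}}\cdots\int_{\mathbb{S}^{m-1}} \det(x_1,\dots,x_m)^2\, g(x_1) g(x_2)\, d{\cal H}(x_1)\cdots d{\cal H}(x_m) = c_m \Big(\int_{\mathbb{S}^{m-1}} g\, d{\cal H}^{m-1}\Big)^2$, where $c_m>0$ is a constant depending only on $m$ (and the last $m-2$ variables are integrated without weights). -/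

import Mathlib

open MeasureTheory


section aux
variable {n : ℕ}

lemma lipschitz_equiv_symm (n : ℕ) :
    LipschitzWith (Real.sqrt n).toNNReal ((WithLp.equiv 2 (Fin n → ℝ)).symm) := by
  have h := PiLp.antilipschitzWith_ofLp 2 (fun _ : Fin n => ℝ)
  have h2 := h.to_rightInverse (WithLp.equiv 2 (Fin n → ℝ)).right_inv
  convert h2 using 1
  ext
  simp only [NNReal.coe_rpow]
  rw [Real.coe_toNNReal]
  · norm_num
    rw [Real.sqrt_eq_rpow]
  · positivity
  · rfl

lemma hMeas_lt_top_of_bounded {s : Set (EuclideanSpace ℝ (Fin n))}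
    (hs : Bornology.IsBounded s) : μH[(n : ℝ)] s < ⊤ := by
  set e := WithLp.equiv 2 (Fin n → ℝ)
  have h1 : s = e.symm '' (e '' s) := (Equiv.symm_image_image e s).symm
  have h2 := (lipschitz_equiv_symm n).hausdorffMeasure_image_le
    (d := (n : ℝ)) (by positivity) (e '' s)
  have h3 : (μH[(n : ℝ)] : Measure (Fin n → ℝ)) = volume := by
    have := MeasureTheory.hausdorffMeasure_pi_real (ι := Fin n)
    simpa using this
  rw [h3] at h2
  have hb : Bornology.IsBounded (e '' s) :=
    (PiLp.lipschitzWith_ofLp 2 (fun _ : Fin n => ℝ)).isBounded_image hs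
  have h4 : volume (e '' s) < ⊤ := hb.measure_lt_top
  calc μH[(n : ℝ)] s = μH[(n : ℝ)] (e.symm '' (e '' s)) := by rw [← h1]
    _ ≤ _ := h2
    _ < ⊤ := ENNReal.mul_lt_top (by exact ENNReal.rpow_lt_top_of_nonneg (by positivity) ENNReal.coe_ne_top) h4

lemma hMeas_pos_of_isOpen {s : Set (EuclideanSpace ℝ (Fin n))}
    (hs : IsOpen s) (hne : s.Nonempty) : 0 < μH[(n : ℝ)] s := by
  set e := WithLp.equiv 2 (Fin n → ℝ)
  have h2 := (PiLp.lipschitzWith_ofLp 2 (fun _ : Fin n => ℝ)).hausdorffMeasure_image_le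
    (d := (n : ℝ)) (by positivity) s
  have h3 : (μH[(n : ℝ)] : Measure (Fin n → ℝ)) = volume := by
    have := MeasureTheory.hausdorffMeasure_pi_real (ι := Fin n)
    simpa using this
  rw [h3] at h2
  have hopen : IsOpen (e '' s) := by
    have : e '' s = e.symm ⁻¹' s := by
      ext y; simp [Set.mem_preimage, e, Equiv.image_eq_preimage_symm]
      exact ⟨by rintro ⟨x, hx, rfl⟩; exact hx, fun h => ⟨_, h, rfl⟩⟩
    rw [this]
    exact hs.preimage (PiLp.continuous_toLp 2 (fun _ : Fin n => ℝ))
  have hp : 0 < volume (e '' s) :=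
    hopen.measure_pos volume (hne.image e)
  have := lt_of_lt_of_le hp h2
  by_contra h
  push_neg at h
  simp only [le_zero_iff] at h
  rw [h, mul_zero] at this
  exact lt_irrefl 0 this

lemma norm_sq_eq {k : ℕ} (x : EuclideanSpace ℝ (Fin k)) : ‖x‖ ^ 2 = ∑ i, x i ^ 2 := by
  rw [EuclideanSpace.norm_eq, Real.sq_sqrt (by positivity)]
  simp [Real.norm_eq_abs, sq_abs]

lemma dist_sq_eq {k : ℕ} (x y : EuclideanSpace ℝ (Fin k)) :
    dist x y ^ 2 = ∑ i, (x i - y i) ^ 2 := by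
  rw [EuclideanSpace.dist_eq, Real.sq_sqrt (by positivity)]
  simp [Real.dist_eq, sq_abs]

lemma sphere_hMeas_pos (n : ℕ) :
    0 < μH[(n : ℝ)] (Metric.sphere (0 : EuclideanSpace ℝ (Fin (n+1))) 1) := by
  set P : EuclideanSpace ℝ (Fin (n+1)) → EuclideanSpace ℝ (Fin n) :=
    fun x => WithLp.toLp 2 (fun j => x j.castSucc : Fin n → ℝ) with hP
  have hlip : LipschitzWith 1 P := by
    apply LipschitzWith.of_dist_le_mul
    intro x y
    rw [NNReal.coe_one, one_mul]
    have h1 : dist (P x) (P y) ^ 2 ≤ dist x y ^ 2 := by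
      rw [dist_sq_eq, dist_sq_eq]
      rw [Fin.sum_univ_castSucc (f := fun i => (x i - y i) ^ 2)]
      have : (0:ℝ) ≤ (x (Fin.last n) - y (Fin.last n)) ^ 2 := sq_nonneg _
      simp only [hP, WithLp.ofLp_toLp]
      nlinarith [Finset.sum_nonneg (fun (i : Fin n) (_ : i ∈ Finset.univ) =>
        sq_nonneg (x i.castSucc - y i.castSucc))]
    nlinarith [dist_nonneg (x := P x) (y := P y), dist_nonneg (x := x) (y := y)]
  have hsub : Metric.ball (0 : EuclideanSpace ℝ (Fin n)) 1 ⊆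
      P '' (Metric.sphere (0 : EuclideanSpace ℝ (Fin (n+1))) 1) := by
    intro z hz
    rw [Metric.mem_ball, dist_zero_right] at hz
    have hz1 : ‖z‖ ^ 2 ≤ 1 := by nlinarith [norm_nonneg z]
    set x : EuclideanSpace ℝ (Fin (n+1)) :=
      WithLp.toLp 2 (Fin.snoc z (Real.sqrt (1 - ‖z‖^2)) : Fin (n+1) → ℝ) with hx
    refine ⟨x, ?_, ?_⟩
    · rw [Metric.mem_sphere, dist_zero_right]
      have h2 : ‖x‖ ^ 2 = 1 := by
        rw [norm_sq_eq, Fin.sum_univ_castSucc (f := fun i => x i ^ 2)]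
        have h3 : ∀ i : Fin n, x i.castSucc = z i := fun i => by
          rw [hx, WithLp.ofLp_toLp]; exact Fin.snoc_castSucc _ _ i
        have h4 : x (Fin.last n) = Real.sqrt (1 - ‖z‖^2) := by
          rw [hx, WithLp.ofLp_toLp]; exact Fin.snoc_last _ _
        simp only [h3, h4]
        rw [Real.sq_sqrt (by linarith)]
        rw [← norm_sq_eq]; ring
      nlinarith [norm_nonneg x]
    · ext j
      simp only [hP, hx, WithLp.ofLp_toLp]
      exact Fin.snoc_castSucc _ _ j
  have h1 : 0 < μH[(n : ℝ)] (Metric.ball (0 : EuclideanSpace ℝ (Fin n)) 1) :=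
    hMeas_pos_of_isOpen Metric.isOpen_ball (Metric.nonempty_ball.2 one_pos)
  have h2 := hlip.hausdorffMeasure_image_le (d := (n : ℝ)) (by positivity)
    (Metric.sphere (0 : EuclideanSpace ℝ (Fin (n+1))) 1)
  simp only [ENNReal.coe_one, ENNReal.one_rpow, one_mul] at h2
  calc (0:ENNReal) < μH[(n : ℝ)] (Metric.ball (0 : EuclideanSpace ℝ (Fin n)) 1) := h1
    _ ≤ μH[(n : ℝ)] (P '' (Metric.sphere (0 : EuclideanSpace ℝ (Fin (n+1))) 1)) :=
        measure_mono hsub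
    _ ≤ _ := h2
set_option maxHeartbeats 1000000 in
lemma sphere_hMeas_lt_top (n : ℕ) :
    μH[(n : ℝ)] (Metric.sphere (0 : EuclideanSpace ℝ (Fin (n+1))) 1) < ⊤ := by
  classical
  set D : Set (EuclideanSpace ℝ (Fin n)) := {y | ‖y‖ ^ 2 ≤ 1 - 1/(n+1)} with hD
  set F : Fin (n+1) → ℝ → EuclideanSpace ℝ (Fin n) → EuclideanSpace ℝ (Fin (n+1)) :=
    fun i ε y => WithLp.toLp 2 (Fin.insertNth i (ε * Real.sqrt (1 - ‖y‖^2)) (fun j => y j) :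
      Fin (n+1) → ℝ) with hF
  have hne : (0:ℝ) < 1/(n+1) := by positivity
  -- cover
  have hcover : Metric.sphere (0 : EuclideanSpace ℝ (Fin (n+1))) 1 ⊆
      ⋃ p : Fin (n+1) × Bool, F p.1 (if p.2 then 1 else -1) '' D := by
    intro x hx
    rw [Metric.mem_sphere, dist_zero_right] at hx
    have hx2 : ∑ j, x j ^ 2 = 1 := by rw [← norm_sq_eq, hx]; norm_num
    have hex : ∃ i, 1/((n:ℝ)+1) ≤ x i ^ 2 := by
      by_contra hcon
      push_neg at hcon
      have : ∑ j, x j ^ 2 < ∑ _j : Fin (n+1), 1/((n:ℝ)+1) :=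
        Finset.sum_lt_sum_of_nonempty ⟨0, Finset.mem_univ _⟩ (fun i _ => hcon i)
      rw [hx2, Finset.sum_const, Finset.card_univ, Fintype.card_fin] at this
      have : (1:ℝ) < 1 := by
        calc (1:ℝ) < (n+1) • (1/((n:ℝ)+1)) := this
          _ = 1 := by rw [nsmul_eq_mul]; push_cast; field_simp
      linarith
    obtain ⟨i, hi⟩ := hex
    set y : EuclideanSpace ℝ (Fin n) := WithLp.toLp 2 (fun j => x (i.succAbove j) : Fin n → ℝ) with hy
    have hysq : ‖y‖ ^ 2 = 1 - x i ^ 2 := by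
      rw [norm_sq_eq]
      have := Fin.sum_univ_succAbove (fun j => x j ^ 2) i
      rw [hx2] at this
      simp only [hy]
      linarith
    have hyD : y ∈ D := by
      rw [hD, Set.mem_setOf_eq, hysq]
      push_cast
      linarith
    have hsq : Real.sqrt (1 - ‖y‖^2) = |x i| := by
      rw [hysq]
      rw [show (1:ℝ) - (1 - x i ^2) = x i ^ 2 by ring, Real.sqrt_sq_eq_abs]
    have hrm : (fun j => y j) = i.removeNth x := rfl
    by_cases hxi : 0 ≤ x i
    · refine Set.mem_iUnion.2 ⟨⟨i, true⟩, ⟨y, hyD, ?_⟩⟩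
      simp only [hF]
      rw [if_pos trivial]
      rw [hsq, abs_of_nonneg hxi, one_mul, hrm]
      exact congrArg (WithLp.toLp 2) (Fin.insertNth_self_removeNth i x.ofLp)
    · refine Set.mem_iUnion.2 ⟨⟨i, false⟩, ⟨y, hyD, ?_⟩⟩
      simp only [hF]
      rw [if_neg (by simp)]
      rw [hsq, abs_of_neg (lt_of_not_ge hxi), hrm, show (-1 : ℝ) * -x i = x i by ring]
      exact congrArg (WithLp.toLp 2) (Fin.insertNth_self_removeNth i x.ofLp)
  -- Lipschitz
  have hlip : ∀ (i : Fin (n+1)) (ε : ℝ), |ε| = 1 →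
      LipschitzOnWith (Real.sqrt (n+2)).toNNReal (F i ε) D := by
    intro i ε hε
    rw [lipschitzOnWith_iff_dist_le_mul]
    intro y hyD z hzD
    have hy1 : ‖y‖ ^ 2 ≤ 1 - 1/(n+1) := hyD
    have hz1 : ‖z‖ ^ 2 ≤ 1 - 1/(n+1) := hzD
    set a := 1 - ‖y‖^2 with ha
    set b := 1 - ‖z‖^2 with hb
    have han : 1/((n:ℝ)+1) ≤ a := by push_cast at hy1 ⊢; linarith
    have hbn : 1/((n:ℝ)+1) ≤ b := by push_cast at hz1 ⊢; linarith
    have hd2 : dist (F i ε y) (F i ε z) ^ 2 =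
        (ε * Real.sqrt a - ε * Real.sqrt b) ^ 2 + dist y z ^ 2 := by
      rw [dist_sq_eq, dist_sq_eq]
      rw [Fin.sum_univ_succAbove (fun j => ((F i ε y) j - (F i ε z) j) ^ 2) i]
      simp only [hF, WithLp.ofLp_toLp, Fin.insertNth_apply_same, Fin.insertNth_apply_succAbove]
      rw [ha, hb]
    have hab : (Real.sqrt a - Real.sqrt b) ^ 2 ≤ ((n:ℝ)+1) * dist y z ^ 2 := by
      have h1 : Real.sqrt a ^ 2 = a := Real.sq_sqrt (by linarith)
      have h2 : Real.sqrt b ^ 2 = b := Real.sq_sqrt (by linarith)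
      have h3 : Real.sqrt (1/((n:ℝ)+1)) ≤ Real.sqrt a := Real.sqrt_le_sqrt han
      have h4 : Real.sqrt (1/((n:ℝ)+1)) ≤ Real.sqrt b := Real.sqrt_le_sqrt hbn
      have h5 : Real.sqrt (1/((n:ℝ)+1)) ^ 2 = 1/((n:ℝ)+1) := Real.sq_sqrt (by positivity)
      have h6 : |a - b| ≤ 2 * dist y z := by
        have : a - b = ‖z‖^2 - ‖y‖^2 := by rw [ha, hb]; ring
        rw [this]
        have h7 : |‖z‖ - ‖y‖| ≤ dist z y := abs_norm_sub_norm_le z y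
        have h8 : ‖z‖ ≤ 1 := by nlinarith [norm_nonneg z, hne]
        have h9 : ‖y‖ ≤ 1 := by nlinarith [norm_nonneg y, hne]
        have h10 : ‖z‖^2 - ‖y‖^2 = (‖z‖ - ‖y‖) * (‖z‖ + ‖y‖) := by ring
        rw [h10, abs_mul]
        have h11 : |‖z‖ + ‖y‖| ≤ 2 := by
          rw [abs_of_nonneg (by positivity)]; linarith
        rw [dist_comm y z]
        calc |‖z‖ - ‖y‖| * |‖z‖ + ‖y‖| ≤ dist z y * 2 :=
              mul_le_mul h7 h11 (abs_nonneg _) dist_nonneg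
          _ = 2 * dist z y := by ring
      have h12 : (a - b)^2 ≤ 4 * dist y z ^ 2 := by
        nlinarith [abs_nonneg (a-b), sq_abs (a-b), dist_nonneg (x := y) (y := z)]
      have hsum : 2 * Real.sqrt (1/((n:ℝ)+1)) ≤ Real.sqrt a + Real.sqrt b := by linarith
      have hprod : (Real.sqrt a - Real.sqrt b) * (Real.sqrt a + Real.sqrt b) = a - b := by
        linear_combination h1 - h2
      set t : ℝ := (n:ℝ) + 1 with ht
      have htpos : (0:ℝ) < t := by positivity
      set u := Real.sqrt a - Real.sqrt b with hu
      set v := Real.sqrt a + Real.sqrt b with hv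
      have hv0 : 0 ≤ v := by positivity
      have hv2 : 4 * (1/t) ≤ v^2 := by
        have h20 : (0:ℝ) ≤ 2 * Real.sqrt (1/t) := by positivity
        have hq := mul_self_le_mul_self h20 hsum
        calc 4 * (1/t) = (2 * Real.sqrt (1/t)) * (2 * Real.sqrt (1/t)) := by
              linear_combination (-4 : ℝ) * h5
          _ ≤ v * v := hq
          _ = v^2 := (sq v).symm
      have huv : u^2 * v^2 ≤ 4 * dist y z ^2 := by
        have : u^2 * v^2 = (a - b)^2 := by rw [← hprod]; ring
        rw [this]; exact h12
      have hfin : u^2 * (4 * (1/t)) ≤ 4 * dist y z ^ 2 :=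
        le_trans (mul_le_mul_of_nonneg_left hv2 (sq_nonneg u)) huv
      have hfin2 : u^2 * (4 * (1/t)) * t ≤ 4 * dist y z ^ 2 * t :=
        mul_le_mul_of_nonneg_right hfin htpos.le
      have hfin3 : u^2 * (4 * (1/t)) * t = 4 * u^2 := by
        field_simp
      rw [hfin3] at hfin2
      calc u ^ 2 ≤ t * dist y z ^ 2 := by linarith
        _ = ((n:ℝ)+1) * dist y z ^ 2 := by rw [ht]
    have hKc : ((Real.sqrt (n+2)).toNNReal : ℝ) = Real.sqrt (n+2) :=
      Real.coe_toNNReal _ (Real.sqrt_nonneg _)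
    have hd3 : dist (F i ε y) (F i ε z) ^ 2 ≤ (n+2 : ℝ) * dist y z ^ 2 := by
      rw [hd2]
      have : (ε * Real.sqrt a - ε * Real.sqrt b)^2 = ε^2 * (Real.sqrt a - Real.sqrt b)^2 := by ring
      rw [this]
      have hε2 : ε^2 = 1 := by rw [← sq_abs, hε]; norm_num
      rw [hε2, one_mul]
      push_cast
      nlinarith [dist_nonneg (x := y) (y := z)]
    rw [hKc]
    have hs : Real.sqrt (n+2) * dist y z = Real.sqrt ((n+2) * dist y z ^2) := by
      rw [Real.sqrt_mul (by positivity), Real.sqrt_sq dist_nonneg]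
    rw [hs]
    calc dist (F i ε y) (F i ε z) = Real.sqrt (dist (F i ε y) (F i ε z) ^ 2) :=
          (Real.sqrt_sq dist_nonneg).symm
      _ ≤ Real.sqrt ((n+2 : ℝ) * dist y z ^ 2) := Real.sqrt_le_sqrt hd3
  -- conclude
  have hDb : Bornology.IsBounded D := by
    have : D ⊆ Metric.closedBall 0 1 := by
      intro y hyD
      have h1 : ‖y‖^2 ≤ 1 - 1/(n+1) := hyD
      rw [Metric.mem_closedBall, dist_zero_right]
      nlinarith [norm_nonneg y, hne]
    exact (Metric.isBounded_closedBall).subset this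
  have hDfin : μH[(n : ℝ)] D < ⊤ := hMeas_lt_top_of_bounded hDb
  calc μH[(n : ℝ)] (Metric.sphere (0 : EuclideanSpace ℝ (Fin (n+1))) 1)
      ≤ μH[(n : ℝ)] (⋃ p : Fin (n+1) × Bool, F p.1 (if p.2 then 1 else -1) '' D) :=
        measure_mono hcover
    _ ≤ ∑ p : Fin (n+1) × Bool, μH[(n : ℝ)] (F p.1 (if p.2 then 1 else -1) '' D) := by
        exact measure_iUnion_fintype_le _ _
    _ < ⊤ := by
        apply ENNReal.sum_lt_top.2
        intro p _
        have hlp := hlip p.1 (if p.2 then 1 else -1) (by cases p.2 <;> simp)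
        calc μH[(n : ℝ)] (F p.1 (if p.2 then 1 else -1) '' D)
            ≤ ((Real.sqrt (n+2)).toNNReal : ENNReal) ^ (n:ℝ) * μH[(n : ℝ)] D :=
              hlp.hausdorffMeasure_image_le (by positivity)
          _ < ⊤ := ENNReal.mul_lt_top
              (ENNReal.rpow_lt_top_of_nonneg (by positivity) ENNReal.coe_ne_top) hDfin
section piHelpers
variable {ι : Type*} [Fintype ι] {α : Type*} [MeasurableSpace α]

lemma integral_pi_prod (μ : Measure α) [SigmaFinite μ] (f : ι → α → ℝ) :
    ∫ x : ι → α, ∏ i, f i (x i) ∂(Measure.pi fun _ => μ) = ∏ i, ∫ x, f i x ∂μ := by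
  letI : MeasureSpace α := ⟨μ⟩
  haveI : SigmaFinite (volume : Measure α) := ‹_›
  have h : (Measure.pi fun _ : ι => μ) = (volume : Measure (ι → α)) := by
    rw [MeasureTheory.volume_pi]; rfl
  rw [h]
  exact MeasureTheory.integral_fintype_prod_eq_prod f


lemma integrable_pi_prod (μ : Measure α) [SigmaFinite μ] (f : ι → α → ℝ)
    (hf : ∀ i, Integrable (f i) μ) :
    Integrable (fun x : ι → α => ∏ i, f i (x i)) (Measure.pi fun _ => μ) := by
  letI : MeasureSpace α := ⟨μ⟩
  haveI : SigmaFinite (volume : Measure α) := ‹_›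
  have h : (Measure.pi fun _ : ι => μ) = (volume : Measure (ι → α)) := by
    rw [MeasureTheory.volume_pi]; rfl
  rw [h]
  exact MeasureTheory.Integrable.fintype_prod hf

end piHelpers

section iso
variable {m : ℕ}

/-- Negation of the `i`-th coordinate as an isometry equivalence. -/
noncomputable def negAtIso (i : Fin m) : EuclideanSpace ℝ (Fin m) ≃ᵢ EuclideanSpace ℝ (Fin m) where
  toEquiv := Function.Involutive.toPerm
    (fun x => WithLp.toLp 2 (fun j => if j = i then -(x j) else x j : Fin m → ℝ))
    (by
      intro x
      ext j
      by_cases h : j = i <;> simp [h])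
  isometry_toFun := by
    intro x y
    simp only [Function.Involutive.toPerm, Equiv.coe_fn_mk]
    rw [edist_dist, edist_dist]
    congr 1
    rw [EuclideanSpace.dist_eq, EuclideanSpace.dist_eq]
    congr 1
    apply Finset.sum_congr rfl
    intro j _
    by_cases h : j = i <;> simp [h, Real.dist_eq, abs_sub_comm, neg_sub_neg]

lemma negAtIso_apply (i : Fin m) (x : EuclideanSpace ℝ (Fin m)) (j : Fin m) :
    (negAtIso i x) j = if j = i then -(x j) else x j := rfl

lemma negAtIso_norm (i : Fin m) (x : EuclideanSpace ℝ (Fin m)) :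
    ‖negAtIso i x‖ = ‖x‖ := by
  have h : ‖negAtIso i x‖ ^ 2 = ‖x‖ ^ 2 := by
    rw [norm_sq_eq, norm_sq_eq]
    apply Finset.sum_congr rfl
    intro j _
    rw [negAtIso_apply]
    by_cases h : j = i <;> simp [h]
  calc ‖negAtIso i x‖ = Real.sqrt (‖negAtIso i x‖ ^ 2) := (Real.sqrt_sq (norm_nonneg _)).symm
    _ = Real.sqrt (‖x‖ ^ 2) := by rw [h]
    _ = ‖x‖ := Real.sqrt_sq (norm_nonneg _)

/-- Swapping coordinates `i` and `j` as an isometry equivalence. -/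
noncomputable def swapIso (i j : Fin m) : EuclideanSpace ℝ (Fin m) ≃ᵢ EuclideanSpace ℝ (Fin m) where
  toEquiv := Function.Involutive.toPerm
    (fun x => WithLp.toLp 2 (fun k => x (Equiv.swap i j k) : Fin m → ℝ))
    (by
      intro x
      ext k
      show x ((Equiv.swap i j) ((Equiv.swap i j) k)) = x k
      rw [Equiv.swap_apply_self])
  isometry_toFun := by
    intro x y
    simp only [Function.Involutive.toPerm, Equiv.coe_fn_mk]
    rw [edist_dist, edist_dist]
    congr 1
    rw [EuclideanSpace.dist_eq, EuclideanSpace.dist_eq]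
    congr 1
    exact Equiv.sum_comp (Equiv.swap i j) (fun k => dist (x k) (y k) ^ 2)

lemma swapIso_apply (i j : Fin m) (x : EuclideanSpace ℝ (Fin m)) (k : Fin m) :
    (swapIso i j x) k = x (Equiv.swap i j k) := rfl

lemma swapIso_norm (i j : Fin m) (x : EuclideanSpace ℝ (Fin m)) :
    ‖swapIso i j x‖ = ‖x‖ := by
  have h : ‖swapIso i j x‖ ^ 2 = ‖x‖ ^ 2 := by
    rw [norm_sq_eq, norm_sq_eq]
    exact Equiv.sum_comp (Equiv.swap i j) (fun k => x k ^ 2)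
  calc ‖swapIso i j x‖ = Real.sqrt (‖swapIso i j x‖ ^ 2) := (Real.sqrt_sq (norm_nonneg _)).symm
    _ = Real.sqrt (‖x‖ ^ 2) := by rw [h]
    _ = ‖x‖ := Real.sqrt_sq (norm_nonneg _)

/-- Integrals over the restricted Hausdorff measure on the sphere are invariant
under norm-preserving isometry equivalences. -/
lemma integral_sphere_comp_iso (d : ℝ)
    (e : EuclideanSpace ℝ (Fin m) ≃ᵢ EuclideanSpace ℝ (Fin m))
    (hnorm : ∀ x, ‖e x‖ = ‖x‖) (φ : EuclideanSpace ℝ (Fin m) → ℝ)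
    (hφ : AEStronglyMeasurable φ
      ((μH[d] : Measure (EuclideanSpace ℝ (Fin m))).restrict (Metric.sphere 0 1))) :
    ∫ x, φ x ∂((μH[d] : Measure (EuclideanSpace ℝ (Fin m))).restrict (Metric.sphere 0 1)) =
    ∫ x, φ (e x) ∂((μH[d] : Measure (EuclideanSpace ℝ (Fin m))).restrict (Metric.sphere 0 1)) := by
  set ν : Measure (EuclideanSpace ℝ (Fin m)) := μH[d] with hν
  set S : Set (EuclideanSpace ℝ (Fin m)) := Metric.sphere 0 1 with hS
  have hSm : MeasurableSet S := Metric.isClosed_sphere.measurableSet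
  have he : ⇑e ⁻¹' S = S := by
    ext x
    simp only [Set.mem_preimage, hS, Metric.mem_sphere, dist_zero_right, hnorm]
  have hmap : Measure.map ⇑e (ν.restrict S) = ν.restrict S := by
    calc Measure.map ⇑e (ν.restrict S) = Measure.map ⇑e (ν.restrict (⇑e ⁻¹' S)) := by rw [he]
      _ = (Measure.map ⇑e ν).restrict S :=
          (Measure.restrict_map e.continuous.measurable hSm).symm
      _ = ν.restrict S := by rw [hν, e.map_hausdorffMeasure]
  have hφ' : AEStronglyMeasurable φ (Measure.map ⇑e (ν.restrict S)) := by
    rw [hmap]; exact hφ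
  calc ∫ x, φ x ∂(ν.restrict S) = ∫ x, φ x ∂(Measure.map ⇑e (ν.restrict S)) := by rw [hmap]
    _ = ∫ x, φ (e x) ∂(ν.restrict S) :=
        MeasureTheory.integral_map e.continuous.measurable.aemeasurable hφ'

end iso
set_option maxHeartbeats 2000000 in
theorem main_aux (n : ℕ) (i0 i1 : Fin (n+1)) (hne01 : i0 ≠ i1)
    [SigmaFinite ((μH[(n:ℝ)] : Measure (EuclideanSpace ℝ (Fin (n+1)))).restrict
      (Metric.sphere 0 1))] :
    ∃ C : ℝ, 0 < C ∧
      ∀ (g : EuclideanSpace ℝ (Fin (n+1)) → ℝ) (c : ℝ), Measurable g →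
        Integrable g ((μH[(n:ℝ)]).restrict (Metric.sphere 0 1)) →
        (∀ i j : Fin (n+1),
          ∫ x in Metric.sphere (0 : EuclideanSpace ℝ (Fin (n+1))) 1,
            x i * x j * g x ∂(μH[(n:ℝ)]) = if i = j then c else 0) →
        ∫ x : Fin (n+1) → EuclideanSpace ℝ (Fin (n+1)),
            (Matrix.det (Matrix.of fun i j => x j i)) ^ 2 * g (x i0) * g (x i1)
            ∂(Measure.pi fun _ => (μH[(n:ℝ)]).restrict (Metric.sphere 0 1)) =
          C * (∫ x in Metric.sphere (0 : EuclideanSpace ℝ (Fin (n+1))) 1,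
            g x ∂(μH[(n:ℝ)])) ^ 2 := by
  classical
  set ν : Measure (EuclideanSpace ℝ (Fin (n+1))) := μH[(n:ℝ)] with hν
  set S : Set (EuclideanSpace ℝ (Fin (n+1))) := Metric.sphere 0 1 with hS
  set μ : Measure (EuclideanSpace ℝ (Fin (n+1))) := ν.restrict S with hμ
  have hSm : MeasurableSet S := Metric.isClosed_sphere.measurableSet
  haveI hfin : IsFiniteMeasure μ := by
    constructor
    rw [hμ, Measure.restrict_apply_univ, hν, hS]
    exact sphere_hMeas_lt_top n
  have hae : ∀ᵐ x ∂μ, x ∈ S := ae_restrict_mem hSm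
  have hb1 : ∀ x ∈ S, ∀ i, |x i| ≤ 1 := by
    intro x hx i
    have hx1 : ‖x‖ = 1 := by
      rw [hS] at hx
      rwa [Metric.mem_sphere, dist_zero_right] at hx
    have h2 : x i ^ 2 ≤ 1 := by
      have h3 : x i ^ 2 ≤ ∑ j, x j ^ 2 :=
        Finset.single_le_sum (fun j _ => sq_nonneg (x j)) (Finset.mem_univ i)
      rw [← norm_sq_eq, hx1] at h3
      simpa using h3
    nlinarith [abs_nonneg (x i), sq_abs (x i)]
  have hcoord : ∀ i, Measurable fun x : EuclideanSpace ℝ (Fin (n+1)) => x i :=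
    fun i => (measurable_pi_apply i).comp (WithLp.measurable_ofLp 2 _)
  have hInt2 : ∀ p q : Fin (n+1), Integrable (fun x => x p * x q) μ := by
    intro p q
    refine Integrable.mono' (integrable_const (1:ℝ))
      (((hcoord p).mul (hcoord q)).aestronglyMeasurable) ?_
    filter_upwards [hae] with x hx
    rw [Real.norm_eq_abs, abs_mul]
    calc |x p| * |x q| ≤ 1 * 1 :=
        mul_le_mul (hb1 x hx p) (hb1 x hx q) (abs_nonneg _) zero_le_one
      _ = 1 := by ring
  -- off-diagonal second moments vanish
  have hA : ∀ p q : Fin (n+1), p ≠ q → ∫ x, x p * x q ∂μ = 0 := by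
    intro p q hpq
    have h := integral_sphere_comp_iso (m := n+1) (n:ℝ) (negAtIso p) (negAtIso_norm p)
      (fun x => x p * x q) (((hcoord p).mul (hcoord q)).aestronglyMeasurable)
    rw [← hν, ← hS, ← hμ] at h
    have h2 : ∀ x : EuclideanSpace ℝ (Fin (n+1)),
        (negAtIso p x) p * (negAtIso p x) q = -(x p * x q) := by
      intro x
      rw [negAtIso_apply, negAtIso_apply, if_pos rfl, if_neg (Ne.symm hpq)]
      ring
    rw [show (fun x : EuclideanSpace ℝ (Fin (n+1)) =>
        (negAtIso p x) p * (negAtIso p x) q) = fun x => -(x p * x q) from funext h2] at h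
    rw [integral_neg] at h
    linarith
  -- diagonal moments are all equal
  have hdiag : ∀ p q : Fin (n+1), ∫ x, x p * x p ∂μ = ∫ x, x q * x q ∂μ := by
    intro p q
    have h := integral_sphere_comp_iso (m := n+1) (n:ℝ) (swapIso p q) (swapIso_norm p q)
      (fun x => x p * x p) (((hcoord p).mul (hcoord p)).aestronglyMeasurable)
    rw [← hν, ← hS, ← hμ] at h
    have h2 : ∀ x : EuclideanSpace ℝ (Fin (n+1)),
        (swapIso p q x) p * (swapIso p q x) p = x q * x q := by
      intro x
      rw [swapIso_apply, Equiv.swap_apply_left]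
    rw [show (fun x : EuclideanSpace ℝ (Fin (n+1)) =>
        (swapIso p q x) p * (swapIso p q x) p) = fun x => x q * x q from funext h2] at h
    exact h
  have hsum : ∑ p : Fin (n+1), ∫ x, x p * x p ∂μ = (ν S).toReal := by
    rw [← integral_finset_sum Finset.univ (fun p _ => hInt2 p p)]
    have h1 : ∫ x, ∑ p, x p * x p ∂μ = ∫ x, (1:ℝ) ∂μ := by
      apply integral_congr_ae
      filter_upwards [hae] with x hx
      have hx1 : ‖x‖ = 1 := by
        rw [hS] at hx
        rwa [Metric.mem_sphere, dist_zero_right] at hx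
      have h2 : ∑ p, x p * x p = ∑ p, x p ^ 2 := by
        apply Finset.sum_congr rfl; intro p _; ring
      rw [h2, ← norm_sq_eq, hx1]; norm_num
    rw [h1, integral_const, smul_eq_mul, mul_one, hμ, Measure.real, Measure.restrict_apply_univ]
  set aVal : ℝ := (ν S).toReal / (n+1) with haVal_def
  have haVal : ∀ p : Fin (n+1), ∫ x, x p * x p ∂μ = aVal := by
    intro p
    have h1 : (ν S).toReal = ((n:ℝ)+1) * ∫ x, x p * x p ∂μ := by
      rw [← hsum, Finset.sum_congr rfl (fun q _ => hdiag q p), Finset.sum_const,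
        Finset.card_univ, Fintype.card_fin, nsmul_eq_mul]
      push_cast
      try ring
    have h2 : ((n:ℝ)+1) ≠ 0 := by positivity
    have h3 : aVal = (((n:ℝ)+1) * ∫ x, x p * x p ∂μ) / ((n:ℝ)+1) := by
      rw [haVal_def, h1]
    rw [h3, mul_comm, mul_div_assoc, div_self h2, mul_one]
  have hapos : 0 < aVal := by
    rw [haVal_def]
    apply div_pos
    · apply ENNReal.toReal_pos
      · rw [hν, hS]
        exact (sphere_hMeas_pos n).ne'
      · rw [hν, hS]
        exact (sphere_hMeas_lt_top n).ne
    · positivity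
  -- the constant
  refine ⟨((n+1).factorial : ℝ) * aVal ^ (n-1) / ((n:ℝ)+1)^2, ?_, ?_⟩
  · have h1 : (0:ℝ) < ((n+1).factorial : ℝ) := by
      exact_mod_cast Nat.factorial_pos (n+1)
    positivity
  intro g c hgm hgint hmom
  set I : ℝ := ∫ x, g x ∂μ with hI
  have hIntg : ∀ p q : Fin (n+1), Integrable (fun x => x p * x q * g x) μ := by
    intro p q
    refine Integrable.mono' hgint.abs
      ((((hcoord p).mul (hcoord q)).mul hgm).aestronglyMeasurable) ?_
    filter_upwards [hae] with x hx
    rw [Real.norm_eq_abs, abs_mul, abs_mul]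
    have h4 : |x p| * |x q| ≤ 1 := by
      calc |x p| * |x q| ≤ 1 * 1 :=
          mul_le_mul (hb1 x hx p) (hb1 x hx q) (abs_nonneg _) zero_le_one
        _ = 1 := one_mul 1
    calc |x p| * |x q| * |g x| ≤ 1 * |g x| :=
        mul_le_mul_of_nonneg_right h4 (abs_nonneg _)
      _ = |g x| := one_mul _
  have hcI : ((n:ℝ)+1) * c = I := by
    have h1 : ∑ p : Fin (n+1), (if p = p then c else 0) = ((n:ℝ)+1) * c := by
      have hpp : ∀ p : Fin (n+1), (if p = p then c else 0) = c := fun p => if_pos rfl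
      rw [Finset.sum_congr rfl (fun p _ => hpp p), Finset.sum_const, Finset.card_univ,
        Fintype.card_fin, nsmul_eq_mul]
      push_cast
      try ring
    have h2 : ∑ p : Fin (n+1), ∫ x, x p * x p * g x ∂μ = ((n:ℝ)+1) * c := by
      rw [← h1]
      exact Finset.sum_congr rfl (fun p _ => hmom p p)
    rw [← h2, ← integral_finset_sum Finset.univ (fun p _ => hIntg p p), hI]
    apply integral_congr_ae
    filter_upwards [hae] with x hx
    have hx1 : ‖x‖ = 1 := by
      rw [hS] at hx
      rwa [Metric.mem_sphere, dist_zero_right] at hx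
    have h3 : ∑ p, x p * x p * g x = (∑ p, x p ^ 2) * g x := by
      rw [Finset.sum_mul]
      apply Finset.sum_congr rfl; intro p _; ring
    rw [h3, ← norm_sq_eq, hx1]; norm_num
  -- the weight functions
  set w : Fin (n+1) → EuclideanSpace ℝ (Fin (n+1)) → ℝ :=
    fun i y => if i = i0 then g y else if i = i1 then g y else 1 with hw
  set f : Equiv.Perm (Fin (n+1)) → Equiv.Perm (Fin (n+1)) → Fin (n+1) →
      EuclideanSpace ℝ (Fin (n+1)) → ℝ :=
    fun σ τ i y => y (σ i) * y (τ i) * w i y with hf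
  set ee : Equiv.Perm (Fin (n+1)) → ℝ := fun σ => ((Equiv.Perm.sign σ : ℤ) : ℝ) with hee
  have hw_int : ∀ σ τ i, Integrable (f σ τ i) μ := by
    intro σ τ i
    by_cases h0 : i = i0
    · have : f σ τ i = fun y => y (σ i) * y (τ i) * g y := by
        funext y; rw [hf]; simp only [hw, if_pos h0]
      rw [this]; exact hIntg _ _
    · by_cases h1 : i = i1
      · have : f σ τ i = fun y => y (σ i) * y (τ i) * g y := by
          funext y; rw [hf]; simp only [hw, if_neg h0, if_pos h1]
        rw [this]; exact hIntg _ _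
      · have : f σ τ i = fun y => y (σ i) * y (τ i) := by
          funext y; rw [hf]; simp only [hw, if_neg h0, if_neg h1, mul_one]
        rw [this]; exact hInt2 _ _
  have hV : ∀ σ τ i, ∫ y, f σ τ i y ∂μ =
      if σ i = τ i then (if i = i0 ∨ i = i1 then c else aVal) else 0 := by
    intro σ τ i
    by_cases h0 : i = i0
    · have : f σ τ i = fun y => y (σ i) * y (τ i) * g y := by
        funext y; rw [hf]; simp only [hw, if_pos h0]
      rw [this, hmom (σ i) (τ i), if_pos (Or.inl h0)]
    · by_cases h1 : i = i1
      · have : f σ τ i = fun y => y (σ i) * y (τ i) * g y := by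
          funext y; rw [hf]; simp only [hw, if_neg h0, if_pos h1]
        rw [this, hmom (σ i) (τ i), if_pos (Or.inr h1)]
      · have heq : f σ τ i = fun y => y (σ i) * y (τ i) := by
          funext y; rw [hf]; simp only [hw, if_neg h0, if_neg h1, mul_one]
        rw [heq, if_neg (by tauto : ¬(i = i0 ∨ i = i1))]
        by_cases h2 : σ i = τ i
        · rw [if_pos h2, h2]
          exact haVal (τ i)
        · rw [if_neg h2]
          exact hA _ _ h2
  -- rewrite the integrand as a double sum of products
  have hint_eq : ∀ x : Fin (n+1) → EuclideanSpace ℝ (Fin (n+1)),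
      (Matrix.det (Matrix.of fun i j => x j i)) ^ 2 * g (x i0) * g (x i1)
      = ∑ σ : Equiv.Perm (Fin (n+1)), ∑ τ : Equiv.Perm (Fin (n+1)),
          (ee σ * ee τ) * ∏ i, f σ τ i (x i) := by
    intro x
    have hprodw : ∏ i, w i (x i) = g (x i0) * g (x i1) := by
      have hsub : ({i0, i1} : Finset (Fin (n+1))) ⊆ Finset.univ := Finset.subset_univ _
      have hout : ∀ i ∈ Finset.univ, i ∉ ({i0, i1} : Finset (Fin (n+1))) →
          w i (x i) = 1 := by
        intro i _ hi
        simp only [Finset.mem_insert, Finset.mem_singleton] at hi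
        push_neg at hi
        rw [hw]
        simp only [if_neg hi.1, if_neg hi.2]
      rw [← Finset.prod_subset hsub hout, Finset.prod_pair hne01]
      have e0 : w i0 (x i0) = g (x i0) := by rw [hw]; exact if_pos rfl
      have e1 : w i1 (x i1) = g (x i1) := by
        show (if i1 = i0 then g (x i1) else if i1 = i1 then g (x i1) else 1) = g (x i1)
        rw [if_neg (Ne.symm hne01), if_pos rfl]
      rw [e0, e1]
    have hdet : Matrix.det (Matrix.of fun i j => x j i)
        = ∑ σ : Equiv.Perm (Fin (n+1)), ee σ * ∏ i, x i (σ i) := by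
      rw [Matrix.det_apply']
      apply Finset.sum_congr rfl
      intro σ _
      rfl
    calc (Matrix.det (Matrix.of fun i j => x j i)) ^ 2 * g (x i0) * g (x i1)
        = ((∑ σ : Equiv.Perm (Fin (n+1)), ee σ * ∏ i, x i (σ i)) *
           (∑ τ : Equiv.Perm (Fin (n+1)), ee τ * ∏ i, x i (τ i))) *
          (∏ i, w i (x i)) := by
          rw [hdet, hprodw, sq]; ring
      _ = ∑ σ : Equiv.Perm (Fin (n+1)), ∑ τ : Equiv.Perm (Fin (n+1)),
            (ee σ * ee τ) * ∏ i, f σ τ i (x i) := by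
          rw [Finset.sum_mul_sum, Finset.sum_mul]
          apply Finset.sum_congr rfl
          intro σ _
          rw [Finset.sum_mul]
          apply Finset.sum_congr rfl
          intro τ _
          have hp : ∏ i, f σ τ i (x i)
              = (∏ i, x i (σ i)) * (∏ i, x i (τ i)) * (∏ i, w i (x i)) := by
            rw [hf]
            rw [← Finset.prod_mul_distrib, ← Finset.prod_mul_distrib]
          rw [hp]
          ring
  -- compute the integral
  have hterm_int : ∀ σ τ : Equiv.Perm (Fin (n+1)),
      Integrable (fun x : Fin (n+1) → EuclideanSpace ℝ (Fin (n+1)) =>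
        (ee σ * ee τ) * ∏ i, f σ τ i (x i)) (Measure.pi fun _ => μ) := by
    intro σ τ
    exact (integrable_pi_prod μ _ (hw_int σ τ)).const_mul _
  have hmain : ∫ x : Fin (n+1) → EuclideanSpace ℝ (Fin (n+1)),
      (Matrix.det (Matrix.of fun i j => x j i)) ^ 2 * g (x i0) * g (x i1)
      ∂(Measure.pi fun _ => μ)
      = ∑ σ : Equiv.Perm (Fin (n+1)), ∑ τ : Equiv.Perm (Fin (n+1)),
          (ee σ * ee τ) * ∏ i, ∫ y, f σ τ i y ∂μ := by
    rw [integral_congr_ae (Filter.Eventually.of_forall hint_eq)]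
    rw [integral_finset_sum Finset.univ
      (fun σ _ => integrable_finset_sum Finset.univ (fun τ _ => hterm_int σ τ))]
    apply Finset.sum_congr rfl
    intro σ _
    rw [integral_finset_sum Finset.univ (fun τ _ => hterm_int σ τ)]
    apply Finset.sum_congr rfl
    intro τ _
    rw [MeasureTheory.integral_const_mul, integral_pi_prod μ (f σ τ)]
  -- evaluate the double sum
  have hoff : ∀ σ τ : Equiv.Perm (Fin (n+1)), σ ≠ τ →
      (∏ i, ∫ y, f σ τ i y ∂μ) = 0 := by
    intro σ τ hστ
    have hex : ∃ i, σ i ≠ τ i := by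
      by_contra h
      push_neg at h
      exact hστ (Equiv.ext h)
    obtain ⟨i, hi⟩ := hex
    apply Finset.prod_eq_zero (Finset.mem_univ i)
    rw [hV, if_neg hi]
  have hdiagprod : ∀ σ : Equiv.Perm (Fin (n+1)),
      (∏ i, ∫ y, f σ σ i y ∂μ) = c^2 * aVal^(n-1) := by
    intro σ
    have h1 : ∀ i : Fin (n+1), ∫ y, f σ σ i y ∂μ
        = if i = i0 ∨ i = i1 then c else aVal := by
      intro i
      rw [hV, if_pos rfl]
    rw [Finset.prod_congr rfl (fun i _ => h1 i)]
    have hsub : ({i0, i1} : Finset (Fin (n+1))) ⊆ Finset.univ := Finset.subset_univ _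
    rw [← Finset.prod_sdiff hsub]
    have h2 : ∏ i ∈ ({i0, i1} : Finset (Fin (n+1))),
        (if i = i0 ∨ i = i1 then c else aVal) = c^2 := by
      rw [Finset.prod_pair hne01, if_pos (Or.inl rfl), if_pos (Or.inr rfl)]
      ring
    have h3 : ∏ i ∈ Finset.univ \ ({i0, i1} : Finset (Fin (n+1))),
        (if i = i0 ∨ i = i1 then c else aVal) = aVal ^ (n-1) := by
      have h4 : ∀ i ∈ Finset.univ \ ({i0, i1} : Finset (Fin (n+1))),
          (if i = i0 ∨ i = i1 then c else aVal) = aVal := by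
        intro i hi
        rw [Finset.mem_sdiff, Finset.mem_insert, Finset.mem_singleton] at hi
        rw [if_neg (by tauto)]
      rw [Finset.prod_congr rfl h4, Finset.prod_const]
      congr 1
      rw [Finset.card_sdiff_of_subset hsub, Finset.card_univ, Fintype.card_fin,
        Finset.card_pair hne01]
      omega
    rw [h2, h3]
    ring
  have hee1 : ∀ σ : Equiv.Perm (Fin (n+1)), ee σ * ee σ = 1 := by
    intro σ
    have h0 : ee σ = ((Equiv.Perm.sign σ : ℤ) : ℝ) := rfl
    rw [h0]
    rcases Int.units_eq_one_or (Equiv.Perm.sign σ) with h | h <;> rw [h] <;> norm_num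
  have hsum2 : ∑ σ : Equiv.Perm (Fin (n+1)), ∑ τ : Equiv.Perm (Fin (n+1)),
      (ee σ * ee τ) * ∏ i, ∫ y, f σ τ i y ∂μ
      = ((n+1).factorial : ℝ) * (c^2 * aVal^(n-1)) := by
    have h1 : ∀ σ : Equiv.Perm (Fin (n+1)),
        ∑ τ : Equiv.Perm (Fin (n+1)), (ee σ * ee τ) * ∏ i, ∫ y, f σ τ i y ∂μ
        = c^2 * aVal^(n-1) := by
      intro σ
      rw [Finset.sum_eq_single_of_mem σ (Finset.mem_univ σ)
        (fun τ _ hτ => by rw [hoff σ τ (Ne.symm hτ), mul_zero])]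
      rw [hdiagprod σ, hee1 σ, one_mul]
    rw [Finset.sum_congr rfl (fun σ _ => h1 σ), Finset.sum_const, Finset.card_univ,
      Fintype.card_perm, Fintype.card_fin, nsmul_eq_mul]
  rw [hmain, hsum2, ← hcI]
  have hnz : ((n:ℝ)+1) ≠ 0 := by positivity
  field_simp

/-- The unit sphere `S^{m-1} ⊆ ℝ^m`. -/
def unitSphere (m : ℕ) : Set (EuclideanSpace ℝ (Fin m)) := Metric.sphere 0 1

/-- The determinant-expansion identity: if the second moment matrix of `g` is scalar,
then the iterated determinant integral with weight `g(x₁)g(x₂)` factors as a dimensional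
constant times `(∫ g)²`. -/
theorem det_integral_of_isotropic (m : ℕ) (hm : 2 ≤ m)
    [SigmaFinite (μH[(m : ℝ) - 1].restrict (unitSphere m))] :
    ∃ C : ℝ, 0 < C ∧
      ∀ (g : EuclideanSpace ℝ (Fin m) → ℝ) (c : ℝ), Measurable g →
        Integrable g (μH[(m : ℝ) - 1].restrict (unitSphere m)) →
        (∀ i j : Fin m,
          ∫ x in unitSphere m, x i * x j * g x ∂(μH[(m : ℝ) - 1]) =
            if i = j then c else 0) →
        ∫ x : Fin m → EuclideanSpace ℝ (Fin m),
            (Matrix.det (Matrix.of fun i j => x j i)) ^ 2 *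
              g (x ⟨0, by omega⟩) * g (x ⟨1, by omega⟩)
            ∂(Measure.pi fun _ => μH[(m : ℝ) - 1].restrict (unitSphere m)) =
          C * (∫ x in unitSphere m, g x ∂(μH[(m : ℝ) - 1])) ^ 2 := by
  
  obtain ⟨n, rfl⟩ : ∃ n, m = n + 1 := ⟨m - 1, by omega⟩
  have hd : ((n+1 : ℕ) : ℝ) - 1 = (n : ℝ) := by push_cast; ring
  haveI hsf : SigmaFinite
      ((μH[(n:ℝ)] : Measure (EuclideanSpace ℝ (Fin (n+1)))).restrict (Metric.sphere 0 1)) := by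
    have h := ‹SigmaFinite (μH[((n+1 : ℕ) : ℝ) - 1].restrict (unitSphere (n+1)))›
    rw [hd] at h
    exact h
  simp only [hd, unitSphere]
  exact main_aux n ⟨0, by omega⟩ ⟨1, by omega⟩ (Fin.ne_of_val_ne (by norm_num))
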